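/- A semi-free S¹-space X is completely specified up to S¹-equivariant homeomorphism by the subset F ⊆ B = X/S¹ over which the fixed points lie together with the isomorphism class of the principal S¹-bundle (X − π⁻¹(F)) → (B − F), where π : X → B is the quotient map; equivalently, by F ⊂ B and a class λ ∈ H²(B−F, ℤ). -/
import Mathlib


/-!
STATEMENT 1: A semi-free `S¹`-space `X` is completely specified up to
`S¹`-equivariant homeomorphism by the subset `F ⊆ B = X/S¹` over which the fixed
points lie together with the isomorphism class of the principal `S¹`-bundle
`(X − π⁻¹(F)) → (B − F)`, where `π : X → B` is the quotient map; equivalently, by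
`F ⊂ B` and a class `λ ∈ H²(B−F, ℤ)`.

The classification of principal `S¹`-bundles over `B−F` by `H²(B−F,ℤ)` (CONTEXT)
is taken as abstract data: a group `H2` together with a class map `bundleClass` such
that two semi-free spaces over `(B,F)` have equal classes iff their free parts are
`S¹`-equivariantly homeomorphic over `B−F`.
-/

/-- A semi-free `S¹`-space over `B`, with fixed points lying over `F ⊆ B`. -/
structure SemiFreeSpaceOver (B : Type*) [TopologicalSpace B] (F : Set B) where
  X : Type*
  [topX : TopologicalSpace X]
  [mulX : MulAction Circle X]
  continuous_smul : Continuous fun p : Circle × X => p.1 • p.2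
  /-- the quotient map `π : X → B = X/S¹` -/
  π : X → B
  quotient : Topology.IsQuotientMap π
  orbit_eq : ∀ x y : X, π x = π y ↔ y ∈ MulAction.orbit Circle x
  /-- semi-freeness: every orbit is free or a fixed point -/
  semifree : ∀ x : X,
    MulAction.stabilizer Circle x = ⊥ ∨ MulAction.stabilizer Circle x = ⊤
  /-- the fixed points are exactly the points lying over `F` -/
  fixed_over : ∀ x : X, MulAction.stabilizer Circle x = ⊤ ↔ π x ∈ F

attribute [instance] SemiFreeSpaceOver.topX SemiFreeSpaceOver.mulX

variable {B : Type*} [TopologicalSpace B] {F : Set B}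

/-- An `S¹`-equivariant homeomorphism over `B` between two semi-free spaces. -/
def SemiFreeSpaceOver.EquivHomeo (X₁ X₂ : SemiFreeSpaceOver B F) : Prop :=
  ∃ h : X₁.X ≃ₜ X₂.X,
    (∀ (g : Circle) (x : X₁.X), h (g • x) = g • h x) ∧
    ∀ x : X₁.X, X₂.π (h x) = X₁.π x

/-- An `S¹`-equivariant homeomorphism over `B−F` between the free parts
`X − π⁻¹(F)` of two semi-free spaces, i.e. an isomorphism of the associated
principal `S¹`-bundles over `B−F`. -/
def SemiFreeSpaceOver.FreePartIso (X₁ X₂ : SemiFreeSpaceOver B F) : Prop :=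
  ∃ h : {x : X₁.X // X₁.π x ∉ F} ≃ₜ {x : X₂.X // X₂.π x ∉ F},
    (∀ (g : Circle) (x : {x : X₁.X // X₁.π x ∉ F}) (hg : X₁.π (g • x.1) ∉ F),
      (h ⟨g • x.1, hg⟩).1 = g • (h x).1) ∧
    ∀ x, X₂.π (h x).1 = X₁.π x.1

-- Auxiliary lemmas
namespace SemiFreeSpaceOver

lemma pi_smul (X : SemiFreeSpaceOver B F) (g : Circle) (x : X.X) :
    X.π (g • x) = X.π x :=
  ((X.orbit_eq x (g • x)).mpr ⟨g, rfl⟩).symm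

lemma smul_fixed (X : SemiFreeSpaceOver B F) {x : X.X} (hx : X.π x ∈ F) (g : Circle) :
    g • x = x := by
  have h := (X.fixed_over x).mpr hx
  have hg : g ∈ MulAction.stabilizer Circle x := h ▸ Subgroup.mem_top g
  exact hg

lemma fixed_unique (X : SemiFreeSpaceOver B F) {v w : X.X} (hv : X.π v ∈ F)
    (hw : X.π v = X.π w) : w = v := by
  obtain ⟨g, hg⟩ := MulAction.mem_orbit_iff.mp ((X.orbit_eq v w).mp hw)
  rw [← hg, X.smul_fixed hv]

lemma continuous_smul_const (X : SemiFreeSpaceOver B F) (g : Circle) :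
    Continuous fun x : X.X => g • x :=
  X.continuous_smul.comp (continuous_const.prodMk continuous_id)

/-- The invariant hull of a set. -/
def hull (X : SemiFreeSpaceOver B F) (V : Set X.X) : Set X.X :=
  ⋃ g : Circle, (fun x => g • x) '' V

lemma subset_hull (X : SemiFreeSpaceOver B F) (V : Set X.X) : V ⊆ X.hull V := by
  intro x hx
  exact Set.mem_iUnion.mpr ⟨1, x, hx, one_smul _ _⟩

lemma isOpen_hull (X : SemiFreeSpaceOver B F) {V : Set X.X} (hV : IsOpen V) :
    IsOpen (X.hull V) := by
  refine isOpen_iUnion fun g => ?_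
  have h : (fun x => g • x) '' V = (fun x => g⁻¹ • x) ⁻¹' V := by
    ext z
    constructor
    · rintro ⟨w, hw, rfl⟩; simpa [inv_smul_smul] using hw
    · intro hz; exact ⟨g⁻¹ • z, hz, smul_inv_smul g z⟩
  rw [h]
  exact hV.preimage (X.continuous_smul_const g⁻¹)

lemma pi_preimage_image_hull (X : SemiFreeSpaceOver B F) (V : Set X.X) :
    X.π ⁻¹' (X.π '' X.hull V) = X.hull V := by
  apply Set.Subset.antisymm
  · rintro z ⟨w, hw, hpw⟩
    obtain ⟨g', hg'⟩ := MulAction.mem_orbit_iff.mp ((X.orbit_eq w z).mp hpw)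
    obtain ⟨g, v, hv, rfl⟩ := Set.mem_iUnion.mp hw
    rw [← hg', smul_smul]
    exact Set.mem_iUnion.mpr ⟨g' * g, v, hv, rfl⟩
  · exact Set.subset_preimage_image _ _

lemma isOpen_pi_image_hull (X : SemiFreeSpaceOver B F) {V : Set X.X} (hV : IsOpen V) :
    IsOpen (X.π '' X.hull V) :=
  X.quotient.isOpen_preimage.mp (by rw [X.pi_preimage_image_hull]; exact X.isOpen_hull hV)

/-- Tube lemma at a fixed point: an open set containing a fixed point contains
an invariant hull neighborhood of it. -/
lemma exists_tube (X : SemiFreeSpaceOver B F) {V : Set X.X} (hV : IsOpen V)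
    {y : X.X} (hy : y ∈ V) (hyF : X.π y ∈ F) :
    ∃ v : Set X.X, IsOpen v ∧ y ∈ v ∧ X.hull v ⊆ V := by
  have hP : IsOpen ((fun p : Circle × X.X => p.1 • p.2) ⁻¹' V) :=
    hV.preimage X.continuous_smul
  have hsub : (Set.univ : Set Circle) ×ˢ ({y} : Set X.X) ⊆
      (fun p : Circle × X.X => p.1 • p.2) ⁻¹' V := by
    rintro ⟨g, z⟩ hgz
    have hz : z = y := hgz.2
    show g • z ∈ V
    rw [hz, X.smul_fixed hyF]
    exact hy
  obtain ⟨u, v, -, hvo, hu, hyv, huv⟩ :=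
    generalized_tube_lemma isCompact_univ isCompact_singleton hP hsub
  refine ⟨v, hvo, hyv rfl, ?_⟩
  rintro z hz
  obtain ⟨g, w, hw, rfl⟩ := Set.mem_iUnion.mp hz
  exact huv (Set.mk_mem_prod (hu (Set.mem_univ g)) hw)

/-- Key continuity lemma: a map extending a free-part homeomorphism over π is continuous. -/
lemma cont_aux (X₁ X₂ : SemiFreeSpaceOver B F)
    (e : {x : X₁.X // X₁.π x ∉ F} ≃ₜ {x : X₂.X // X₂.π x ∉ F})
    (H : X₁.X → X₂.X)
    (hHπ : ∀ x, X₂.π (H x) = X₁.π x)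
    (hHfree : ∀ x (hx : X₁.π x ∉ F), H x = (e ⟨x, hx⟩).1) :
    Continuous H := by
  rw [continuous_def]
  intro V hV
  rw [isOpen_iff_forall_mem_open]
  intro x hx
  by_cases hxF : X₁.π x ∈ F
  · -- fixed point
    have hHxF : X₂.π (H x) ∈ F := by rw [hHπ]; exact hxF
    obtain ⟨v, hvo, hHxv, htube⟩ := X₂.exists_tube hV hx hHxF
    refine ⟨X₁.π ⁻¹' (X₂.π '' X₂.hull v), ?_, ?_, ?_⟩
    · intro z hz
      have : X₂.π (H z) ∈ X₂.π '' X₂.hull v := by rw [hHπ]; exact hz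
      have hHz : H z ∈ X₂.hull v := by
        rw [← X₂.pi_preimage_image_hull v]; exact this
      exact htube hHz
    · exact (X₂.isOpen_pi_image_hull hvo).preimage X₁.quotient.continuous
    · show X₁.π x ∈ X₂.π '' X₂.hull v
      rw [← hHπ x]
      exact ⟨H x, X₂.subset_hull v hHxv, rfl⟩
  · -- free point
    have hsubO : IsOpen (e ⁻¹' (Subtype.val ⁻¹' V)) :=
      (hV.preimage continuous_subtype_val).preimage e.continuous
    obtain ⟨O, hOopen, hOeq⟩ := isOpen_induced_iff.mp hsubO
    refine ⟨O ∩ X₁.π ⁻¹' (X₂.π '' X₂.hull V), ?_, ?_, ?_⟩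
    · rintro z ⟨hzO, hzπ⟩
      by_cases hzF : X₁.π z ∈ F
      · obtain ⟨w, hwhull, hwπ⟩ := hzπ
        obtain ⟨g, w₀, hw₀, rfl⟩ := Set.mem_iUnion.mp hwhull
        have hwF : X₂.π (g • w₀) ∈ F := by rw [hwπ]; exact hzF
        have hw' : g • w₀ ∈ V := by
          have h0 : X₂.π w₀ ∈ F := by rw [← X₂.pi_smul g w₀]; exact hwF
          rw [X₂.smul_fixed h0]; exact hw₀
        have : H z = g • w₀ :=
          X₂.fixed_unique hwF (by rw [hwπ, hHπ])
        show H z ∈ V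
        rw [this]; exact hw'
      · have : (⟨z, hzF⟩ : {x // X₁.π x ∉ F}) ∈ Subtype.val ⁻¹' O := hzO
        rw [hOeq] at this
        have hmem : (e ⟨z, hzF⟩).1 ∈ V := this
        show H z ∈ V
        rw [hHfree z hzF]; exact hmem
    · exact hOopen.inter ((X₂.isOpen_pi_image_hull hV).preimage X₁.quotient.continuous)
    · constructor
      · have : (⟨x, hxF⟩ : {x // X₁.π x ∉ F}) ∈ e ⁻¹' (Subtype.val ⁻¹' V) := by
          show (e ⟨x, hxF⟩).1 ∈ V
          rw [← hHfree x hxF]; exact hx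
        rw [← hOeq] at this
        exact this
      · show X₁.π x ∈ X₂.π '' X₂.hull V
        rw [← hHπ x]
        exact ⟨H x, X₂.subset_hull V hx, rfl⟩

end SemiFreeSpaceOver

theorem statement1
    (B : Type*) [TopologicalSpace B] (F : Set B)
    -- `H²(B−F, ℤ)` together with the classification of principal `S¹`-bundles
    -- over `B−F`: equal classes iff isomorphic bundles (equivariantly over `B−F`)
    (H2 : Type*) [AddCommGroup H2]
    (bundleClass : SemiFreeSpaceOver B F → H2)
    (hclassifies : ∀ X₁ X₂ : SemiFreeSpaceOver B F,
      bundleClass X₁ = bundleClass X₂ ↔ X₁.FreePartIso X₂) :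
    -- the classification: equal data `(F, λ)` ⇒ equivariantly homeomorphic
    ∀ X₁ X₂ : SemiFreeSpaceOver B F,
      bundleClass X₁ = bundleClass X₂ → X₁.EquivHomeo X₂ := by
  intro X₁ X₂ hclass
  obtain ⟨e, heg, heπ⟩ := (hclassifies X₁ X₂).mp hclass
  classical
  -- the forward extension
  set H : X₁.X → X₂.X := fun x =>
    if hx : X₁.π x ∈ F then Classical.choose (X₂.quotient.surjective (X₁.π x))
    else (e ⟨x, hx⟩).1 with hHdef
  set K : X₂.X → X₁.X := fun y =>
    if hy : X₂.π y ∈ F then Classical.choose (X₁.quotient.surjective (X₂.π y))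
    else (e.symm ⟨y, hy⟩).1 with hKdef
  have hHfree : ∀ x (hx : X₁.π x ∉ F), H x = (e ⟨x, hx⟩).1 := fun x hx => dif_neg hx
  have hKfree : ∀ y (hy : X₂.π y ∉ F), K y = (e.symm ⟨y, hy⟩).1 := fun y hy => dif_neg hy
  have heπ' : ∀ y, X₁.π (e.symm y).1 = X₂.π y.1 := by
    intro y
    have h := heπ (e.symm y)
    rw [e.apply_symm_apply] at h
    exact h.symm
  have hHπ : ∀ x, X₂.π (H x) = X₁.π x := by
    intro x
    by_cases hx : X₁.π x ∈ F
    · rw [hHdef]; simp only [dif_pos hx]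
      exact Classical.choose_spec (X₂.quotient.surjective (X₁.π x))
    · rw [hHfree x hx]; exact heπ ⟨x, hx⟩
  have hKπ : ∀ y, X₁.π (K y) = X₂.π y := by
    intro y
    by_cases hy : X₂.π y ∈ F
    · rw [hKdef]; simp only [dif_pos hy]
      exact Classical.choose_spec (X₁.quotient.surjective (X₂.π y))
    · rw [hKfree y hy]; exact heπ' ⟨y, hy⟩
  have hleft : ∀ x, K (H x) = x := by
    intro x
    by_cases hx : X₁.π x ∈ F
    · exact X₁.fixed_unique hx (by rw [hKπ, hHπ])
    · rw [hHfree x hx]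
      have h2 : X₂.π (e ⟨x, hx⟩).1 ∉ F := by rw [heπ]; exact hx
      rw [hKfree _ h2]
      have h3 : (⟨(e ⟨x, hx⟩).1, h2⟩ : {y // X₂.π y ∉ F}) = e ⟨x, hx⟩ := Subtype.ext rfl
      rw [h3, e.symm_apply_apply]
  have hright : ∀ y, H (K y) = y := by
    intro y
    by_cases hy : X₂.π y ∈ F
    · exact X₂.fixed_unique hy (by rw [hHπ, hKπ])
    · rw [hKfree y hy]
      have h2 : X₁.π (e.symm ⟨y, hy⟩).1 ∉ F := by rw [heπ']; exact hy
      rw [hHfree _ h2]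
      have h3 : (⟨(e.symm ⟨y, hy⟩).1, h2⟩ : {x // X₁.π x ∉ F}) = e.symm ⟨y, hy⟩ :=
        Subtype.ext rfl
      rw [h3, e.apply_symm_apply]
  refine ⟨⟨⟨H, K, hleft, hright⟩,
      X₁.cont_aux X₂ e H hHπ hHfree,
      X₂.cont_aux X₁ e.symm K hKπ hKfree⟩, ?_, hHπ⟩
  intro g x
  show H (g • x) = g • H x
  by_cases hx : X₁.π x ∈ F
  · rw [X₁.smul_fixed hx g, X₂.smul_fixed (by rw [hHπ]; exact hx) g]
  · have hgx : X₁.π (g • x) ∉ F := by rw [X₁.pi_smul]; exact hx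
    rw [hHfree _ hgx, hHfree _ hx]
    exact heg g ⟨x, hx⟩ hgx
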